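/- For a finite random variable X (joint PMF P_XY(x,y) = P_X(x)1{x=y}), K_α(X;X) = 2 H_{α/(2−α)}(X) − H_α(X) for α ∈ (0,2), and K_α(X;X) = (α/(α−1)) H_∞(X) − H_α(X) for α ≥ 2. -/

import Mathlib

open scoped ENNReal BigOperators
open Finset

/-- Kullback-Leibler divergence between two PMFs on a finite set, valued in `EReal`
(`⊤` when `P` is not absolutely continuous w.r.t. `Q`). -/
noncomputable def klDiv {X : Type*} [Fintype X] (P Q : X → ℝ≥0∞) : EReal :=
  if ∀ x, Q x = 0 → P x = 0 then
    (((∑ x, (P x).toReal * Real.log ((P x).toReal / (Q x).toReal)) : ℝ) : EReal)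
  else ⊤

/-- Rényi divergence of order `α` (KL divergence at `α = 1`).  The ENNReal conventions
`0 * ⊤ = 0` and `0 ^ y = ⊤` for `y < 0` encode `0/0 = 0` and `p/0 = ∞`. -/
noncomputable def renyiDiv {X : Type*} [Fintype X] (α : ℝ) (P Q : X → ℝ≥0∞) : EReal :=
  if α = 1 then klDiv P Q
  else (((α - 1)⁻¹ : ℝ) : EReal) * ENNReal.log (∑ x, P x ^ α * Q x ^ (1 - α))

/-- Relative α-entropy (Sundaresan's divergence); KL divergence at `α = 1`. -/
noncomputable def relAlphaEnt {X : Type*} [Fintype X] (α : ℝ) (P Q : X → ℝ≥0∞) : EReal :=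
  if α = 1 then klDiv P Q
  else ((α / (1 - α) : ℝ) : EReal) * ENNReal.log (∑ x, P x * Q x ^ (α - 1))
    + ENNReal.log (∑ x, Q x ^ α)
    - (((1 - α)⁻¹ : ℝ) : EReal) * ENNReal.log (∑ x, P x ^ α)

/-- The set of PMFs on a finite type, as a subtype. -/
def PMFon (X : Type*) [Fintype X] : Type _ := {p : X → ℝ≥0∞ // ∑ x, p x = 1}

noncomputable def margX {X Y : Type*} [Fintype X] [Fintype Y] (P : X × Y → ℝ≥0∞) : X → ℝ≥0∞ :=
  fun x => ∑ y, P (x, y)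

noncomputable def margY {X Y : Type*} [Fintype X] [Fintype Y] (P : X × Y → ℝ≥0∞) : Y → ℝ≥0∞ :=
  fun y => ∑ x, P (x, y)

/-- Mutual information of a joint PMF. -/
noncomputable def mutualInfo {X Y : Type*} [Fintype X] [Fintype Y] (P : X × Y → ℝ≥0∞) : EReal :=
  klDiv P (fun p => margX P p.1 * margY P p.2)

/-- The dependence measure `J_α`. -/
noncomputable def Jalpha {X Y : Type*} [Fintype X] [Fintype Y] (α : ℝ) (P : X × Y → ℝ≥0∞) :
    EReal :=
  ⨅ (Q : PMFon X × PMFon Y), renyiDiv α P (fun p => Q.1.1 p.1 * Q.2.1 p.2)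

/-- The dependence measure `K_α`. -/
noncomputable def Kalpha {X Y : Type*} [Fintype X] [Fintype Y] (α : ℝ) (P : X × Y → ℝ≥0∞) :
    EReal :=
  ⨅ (Q : PMFon X × PMFon Y), relAlphaEnt α P (fun p => Q.1.1 p.1 * Q.2.1 p.2)

/-- Rényi entropy of order `β`. -/
noncomputable def renyiEnt {X : Type*} [Fintype X] (β : ℝ) (P : X → ℝ≥0∞) : EReal :=
  if β = 1 then (((∑ x, (P x).toReal * Real.log (P x).toReal⁻¹ : ℝ)) : EReal)
  else (((1 - β)⁻¹ : ℝ) : EReal) * ENNReal.log (∑ x, P x ^ β)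

/-- Min-entropy. -/
noncomputable def minEnt {X : Type*} [Fintype X] (P : X → ℝ≥0∞) : EReal :=
  - ENNReal.log (⨆ x, P x)



section RealLemmas
variable {X : Type*} [Fintype X]

lemma mySum_rpow_le (f : X → ℝ) (hf : ∀ x, 0 ≤ f x) {s : ℝ} (hs : 1 ≤ s) :
    ∑ x, f x ^ s ≤ (∑ x, f x) ^ s := by
  have hS : 0 ≤ ∑ x, f x := Finset.sum_nonneg fun x _ => hf x
  have hs0 : (1 : ℝ) + (s - 1) ≠ 0 := by linarith
  calc ∑ x, f x ^ s = ∑ x, f x * f x ^ (s - 1) := by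
        refine Finset.sum_congr rfl fun x _ => ?_
        have h := Real.rpow_add' (hf x) hs0
        rw [Real.rpow_one] at h
        rw [show (1:ℝ) + (s-1) = s by ring] at h
        rw [h]
    _ ≤ ∑ x, f x * (∑ y, f y) ^ (s - 1) := by
        refine Finset.sum_le_sum fun x _ => ?_
        exact mul_le_mul_of_nonneg_left
          (Real.rpow_le_rpow (hf x) (Finset.single_le_sum (fun y _ => hf y) (mem_univ x))
            (by linarith)) (hf x)
    _ = (∑ x, f x) ^ s := by
        have h := Real.rpow_add' hS hs0
        rw [Real.rpow_one] at h
        rw [show (1:ℝ) + (s-1) = s by ring] at h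
        rw [← Finset.sum_mul, h]

lemma myHolder3 (u v w : X → ℝ) (hu : ∀ x, 0 ≤ u x) (hv : ∀ x, 0 ≤ v x) (hw : ∀ x, 0 ≤ w x)
    {a b c : ℝ} (ha : 0 < a) (hb : 0 < b) (hc : 0 < c) (habc : a + b + c = 1) :
    ∑ x, u x ^ a * v x ^ b * w x ^ c ≤ (∑ x, u x) ^ a * (∑ x, v x) ^ b * (∑ x, w x) ^ c := by
  set U := ∑ x, u x with hU
  set V := ∑ x, v x with hV
  set W := ∑ x, w x with hW
  have hUn : 0 ≤ U := Finset.sum_nonneg fun x _ => hu x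
  have hVn : 0 ≤ V := Finset.sum_nonneg fun x _ => hv x
  have hWn : 0 ≤ W := Finset.sum_nonneg fun x _ => hw x
  rcases eq_or_lt_of_le hUn with hU0 | hU0
  · have : ∀ x, u x = 0 := by
      intro x
      have := (Finset.sum_eq_zero_iff_of_nonneg (fun y _ => hu y)).1 hU0.symm x (mem_univ x)
      exact this
    simp only [this, Real.zero_rpow ha.ne', zero_mul, Finset.sum_const_zero]
    positivity
  rcases eq_or_lt_of_le hVn with hV0 | hV0
  · have : ∀ x, v x = 0 := fun x =>
      (Finset.sum_eq_zero_iff_of_nonneg (fun y _ => hv y)).1 hV0.symm x (mem_univ x)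
    simp only [this, Real.zero_rpow hb.ne', mul_zero, zero_mul, Finset.sum_const_zero]
    positivity
  rcases eq_or_lt_of_le hWn with hW0 | hW0
  · have : ∀ x, w x = 0 := fun x =>
      (Finset.sum_eq_zero_iff_of_nonneg (fun y _ => hw y)).1 hW0.symm x (mem_univ x)
    simp only [this, Real.zero_rpow hc.ne', mul_zero, Finset.sum_const_zero]
    positivity
  have hD : 0 < U ^ a * V ^ b * W ^ c := by positivity
  rw [← div_le_one hD, Finset.sum_div]
  have key : ∀ x, u x ^ a * v x ^ b * w x ^ c / (U ^ a * V ^ b * W ^ c)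
      ≤ a * (u x / U) + b * (v x / V) + c * (w x / W) := by
    intro x
    have h1 : u x ^ a * v x ^ b * w x ^ c / (U ^ a * V ^ b * W ^ c)
        = (u x / U) ^ a * (v x / V) ^ b * (w x / W) ^ c := by
      rw [Real.div_rpow (hu x) hUn, Real.div_rpow (hv x) hVn, Real.div_rpow (hw x) hWn]
      field_simp
    rw [h1]
    exact Real.geom_mean_le_arith_mean3_weighted ha.le hb.le hc.le
      (div_nonneg (hu x) hUn) (div_nonneg (hv x) hVn) (div_nonneg (hw x) hWn) habc
  calc ∑ x, u x ^ a * v x ^ b * w x ^ c / (U ^ a * V ^ b * W ^ c)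
      ≤ ∑ x, (a * (u x / U) + b * (v x / V) + c * (w x / W)) :=
        Finset.sum_le_sum fun x _ => key x
    _ = 1 := by
        rw [Finset.sum_add_distrib, Finset.sum_add_distrib, ← Finset.mul_sum, ← Finset.mul_sum,
          ← Finset.mul_sum, ← Finset.sum_div, ← Finset.sum_div, ← Finset.sum_div, ← hU, ← hV, ← hW,
          div_self hU0.ne', div_self hV0.ne', div_self hW0.ne']
        linarith

lemma myHolder2 (u v : X → ℝ) (hu : ∀ x, 0 ≤ u x) (hv : ∀ x, 0 ≤ v x)
    {a b : ℝ} (ha : 0 < a) (hb : 0 < b) (hab : a + b = 1) :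
    ∑ x, u x ^ a * v x ^ b ≤ (∑ x, u x) ^ a * (∑ x, v x) ^ b := by
  set U := ∑ x, u x with hU
  set V := ∑ x, v x with hV
  have hUn : 0 ≤ U := Finset.sum_nonneg fun x _ => hu x
  have hVn : 0 ≤ V := Finset.sum_nonneg fun x _ => hv x
  rcases eq_or_lt_of_le hUn with hU0 | hU0
  · have : ∀ x, u x = 0 := fun x =>
      (Finset.sum_eq_zero_iff_of_nonneg (fun y _ => hu y)).1 hU0.symm x (mem_univ x)
    simp only [this, Real.zero_rpow ha.ne', zero_mul, Finset.sum_const_zero]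
    positivity
  rcases eq_or_lt_of_le hVn with hV0 | hV0
  · have : ∀ x, v x = 0 := fun x =>
      (Finset.sum_eq_zero_iff_of_nonneg (fun y _ => hv y)).1 hV0.symm x (mem_univ x)
    simp only [this, Real.zero_rpow hb.ne', mul_zero, Finset.sum_const_zero]
    positivity
  have hD : 0 < U ^ a * V ^ b := by positivity
  rw [← div_le_one hD, Finset.sum_div]
  have key : ∀ x, u x ^ a * v x ^ b / (U ^ a * V ^ b)
      ≤ a * (u x / U) + b * (v x / V) := by
    intro x
    have h1 : u x ^ a * v x ^ b / (U ^ a * V ^ b)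
        = (u x / U) ^ a * (v x / V) ^ b := by
      rw [Real.div_rpow (hu x) hUn, Real.div_rpow (hv x) hVn]
      field_simp
    rw [h1]
    exact Real.geom_mean_le_arith_mean2_weighted ha.le hb.le
      (div_nonneg (hu x) hUn) (div_nonneg (hv x) hVn) hab
  calc ∑ x, u x ^ a * v x ^ b / (U ^ a * V ^ b)
      ≤ ∑ x, (a * (u x / U) + b * (v x / V)) := Finset.sum_le_sum fun x _ => key x
    _ = 1 := by
        rw [Finset.sum_add_distrib, ← Finset.mul_sum, ← Finset.mul_sum,
          ← Finset.sum_div, ← Finset.sum_div, ← hU, ← hV,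
          div_self hU0.ne', div_self hV0.ne']
        linarith

lemma myGibbs (p q : X → ℝ) (hp : ∀ x, 0 ≤ p x) (hq : ∀ x, 0 ≤ q x)
    (hps : ∑ x, p x = 1) (hqs : ∑ x, q x ≤ 1) (habs : ∀ x, q x = 0 → p x = 0) :
    ∑ x, p x * Real.log (q x) ≤ ∑ x, p x * Real.log (p x) := by
  have key : ∀ x, p x * Real.log (q x) - p x * Real.log (p x) ≤ q x - p x := by
    intro x
    rcases eq_or_lt_of_le (hp x) with h0 | h0
    · simp [← h0, hq x]
    · have hqx : 0 < q x := by
        rcases eq_or_lt_of_le (hq x) with h1 | h1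
        · exact absurd (habs x h1.symm) h0.ne'
        · exact h1
      have := Real.log_le_sub_one_of_pos (div_pos hqx h0)
      have h2 : p x * Real.log (q x / p x) ≤ p x * (q x / p x - 1) :=
        mul_le_mul_of_nonneg_left this (hp x)
      rw [Real.log_div hqx.ne' h0.ne', mul_sub] at h2
      calc p x * Real.log (q x) - p x * Real.log (p x) ≤ p x * (q x / p x - 1) := h2
        _ = q x - p x := by field_simp
  have := Finset.sum_le_sum (fun x (_ : x ∈ univ) => key x)
  rw [Finset.sum_sub_distrib, Finset.sum_sub_distrib, hps] at this
  linarith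

end RealLemmas
section Plumbing
set_option linter.unusedSectionVars false
variable {X : Type*} [Fintype X] [DecidableEq X]

lemma sum_diag_mul (P : X → ℝ≥0∞) (g : X → X → ℝ≥0∞) :
    ∑ p : X × X, (if p.1 = p.2 then P p.1 else 0) * g p.1 p.2 = ∑ x, P x * g x x := by
  rw [Fintype.sum_prod_type]
  refine Finset.sum_congr rfl fun x _ => ?_
  have h : ∀ y : X, (if x = y then P x else 0) * g x y
      = if x = y then P x * g x y else 0 := by
    intro y; split <;> simp
  calc ∑ y, (if x = y then P x else 0) * g x y
      = ∑ y, (if x = y then P x * g x y else 0) := Finset.sum_congr rfl fun y _ => h y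
    _ = P x * g x x := by simp

lemma sum_le_one_of_sum_eq_one {P : X → ℝ≥0∞} (hP : ∑ x, P x = 1) (x : X) : P x ≤ 1 := by
  rw [← hP]
  exact Finset.single_le_sum (fun y _ => zero_le) (mem_univ x)

lemma exists_ne_zero_of_sum_eq_one {P : X → ℝ≥0∞} (hP : ∑ x, P x = 1) : ∃ x, P x ≠ 0 := by
  by_contra h
  push_neg at h
  simp only [h, Finset.sum_const_zero] at hP
  exact zero_ne_one hP

lemma sum_rpow_ne_zero {P : X → ℝ≥0∞} (hP : ∑ x, P x = 1) {γ : ℝ} (hγ : 0 < γ) :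
    ∑ x, P x ^ γ ≠ 0 := by
  obtain ⟨x0, hx0⟩ := exists_ne_zero_of_sum_eq_one hP
  intro h
  rw [Finset.sum_eq_zero_iff] at h
  have := h x0 (mem_univ x0)
  rw [ENNReal.rpow_eq_zero_iff] at this
  rcases this with ⟨h1, _⟩ | ⟨h1, h2⟩
  · exact hx0 h1
  · linarith

lemma sum_rpow_ne_top {P : X → ℝ≥0∞} (hP : ∑ x, P x = 1) {γ : ℝ} (hγ : 0 < γ) :
    ∑ x, P x ^ γ ≠ ⊤ := by
  intro h
  rw [ENNReal.sum_eq_top] at h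
  obtain ⟨x, _, hx⟩ := h
  exact (ENNReal.rpow_ne_top_of_nonneg hγ.le
    (ne_top_of_le_ne_top ENNReal.one_ne_top (sum_le_one_of_sum_eq_one hP x))) hx

/-- Simplified form of `relAlphaEnt` for a diagonal joint and a product reference. -/
lemma relAlphaEnt_prod (P Q1 Q2 : X → ℝ≥0∞) {α : ℝ} (hα : 0 < α) (hα1 : α ≠ 1) :
    relAlphaEnt α (fun p : X × X => if p.1 = p.2 then P p.1 else 0)
        (fun p => Q1 p.1 * Q2 p.2)
      = ((α / (1 - α) : ℝ) : EReal) * ENNReal.log (∑ x, P x * (Q1 x * Q2 x) ^ (α - 1))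
        + (ENNReal.log (∑ x, Q1 x ^ α) + ENNReal.log (∑ x, Q2 x ^ α))
        - (((1 - α)⁻¹ : ℝ) : EReal) * ENNReal.log (∑ x, P x ^ α) := by
  rw [relAlphaEnt, if_neg hα1]
  have e1 : ∑ p : X × X, (if p.1 = p.2 then P p.1 else 0) * (Q1 p.1 * Q2 p.2) ^ (α - 1)
      = ∑ x, P x * (Q1 x * Q2 x) ^ (α - 1) :=
    sum_diag_mul P (fun x y => (Q1 x * Q2 y) ^ (α - 1))
  have e2 : ∑ p : X × X, (Q1 p.1 * Q2 p.2) ^ α = (∑ x, Q1 x ^ α) * (∑ x, Q2 x ^ α) := by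
    rw [Finset.sum_mul_sum, Fintype.sum_prod_type]
    exact Finset.sum_congr rfl fun x _ => Finset.sum_congr rfl fun y _ =>
      ENNReal.mul_rpow_of_nonneg _ _ hα.le
  have e3 : ∑ p : X × X, (if p.1 = p.2 then P p.1 else 0) ^ α = ∑ x, P x ^ α := by
    rw [Fintype.sum_prod_type]
    refine Finset.sum_congr rfl fun x _ => ?_
    have h : ∀ y : X, (if x = y then P x else 0) ^ α = if x = y then P x ^ α else 0 := by
      intro y; split
      · rfl
      · exact ENNReal.zero_rpow_of_pos hα
    calc ∑ y, (if x = y then P x else 0) ^ α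
        = ∑ y, (if x = y then P x ^ α else 0) := Finset.sum_congr rfl fun y _ => h y
      _ = P x ^ α := by simp
  rw [e1, e2, e3, ENNReal.log_mul_add]

lemma ereal_expr_coe {c1 c2 : ℝ} {T B1 B2 C : ℝ≥0∞} (hT0 : T ≠ 0) (hTt : T ≠ ⊤)
    (hB10 : B1 ≠ 0) (hB1t : B1 ≠ ⊤) (hB20 : B2 ≠ 0) (hB2t : B2 ≠ ⊤)
    (hC0 : C ≠ 0) (hCt : C ≠ ⊤) :
    ((c1 : EReal) * ENNReal.log T + (ENNReal.log B1 + ENNReal.log B2)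
        - ((c2 : ℝ) : EReal) * ENNReal.log C : EReal)
      = ((c1 * Real.log T.toReal + (Real.log B1.toReal + Real.log B2.toReal)
          - c2 * Real.log C.toReal : ℝ) : EReal) := by
  rw [ENNReal.log_pos_real hT0 hTt, ENNReal.log_pos_real hB10 hB1t,
    ENNReal.log_pos_real hB20 hB2t, ENNReal.log_pos_real hC0 hCt]
  norm_cast

end Plumbing
section CoreIneq
variable {X : Type*} [Fintype X]

private lemma eq_of_log_eq {x y : ℝ} (hx : 0 < x) (hy : 0 < y)
    (h : Real.log x = Real.log y) : x = y := by
  rw [← Real.exp_log hx, ← Real.exp_log hy, h]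

/-- Core inequality for `0 < α < 1`. -/
lemma real_core_lt1 {α : ℝ} (hα : 0 < α) (hα1 : α < 1) (p q1 q2 : X → ℝ)
    (hp : ∀ x, 0 ≤ p x) (hq1 : ∀ x, 0 ≤ q1 x) (hq2 : ∀ x, 0 ≤ q2 x)
    (hguard : ∀ x, q1 x * q2 x = 0 → p x = 0)
    (hs : 0 < ∑ x, p x ^ (α / (2 - α)))
    (ht : 0 < ∑ x, p x * (q1 x * q2 x) ^ (α - 1))
    (hb1 : 0 < ∑ x, q1 x ^ α) (hb2 : 0 < ∑ x, q2 x ^ α) :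
    (2 - α) / (1 - α) * Real.log (∑ x, p x ^ (α / (2 - α)))
      ≤ α / (1 - α) * Real.log (∑ x, p x * (q1 x * q2 x) ^ (α - 1))
        + (Real.log (∑ x, q1 x ^ α) + Real.log (∑ x, q2 x ^ α)) := by
  have h2α : (0:ℝ) < 2 - α := by linarith
  have h1α : (0:ℝ) < 1 - α := by linarith
  set a : ℝ := α / (2 - α) with ha_def
  set b : ℝ := (1 - α) / (2 - α) with hb_def
  have ha : 0 < a := div_pos hα h2α
  have hb : 0 < b := div_pos h1α h2α
  have habc : a + b + b = 1 := by rw [ha_def, hb_def]; field_simp; ring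
  have hpt : ∀ x, p x ^ a
      = (p x * (q1 x * q2 x) ^ (α - 1)) ^ a * (q1 x ^ α) ^ b * (q2 x ^ α) ^ b := by
    intro x
    rcases (mul_nonneg (hq1 x) (hq2 x)).eq_or_lt with hq0 | hq0
    · have hpx : p x = 0 := hguard x hq0.symm
      simp [hpx, Real.zero_rpow ha.ne']
    · have hq1x : 0 < q1 x := (hq1 x).lt_of_ne fun h => by
        rw [← h, zero_mul] at hq0; exact lt_irrefl _ hq0
      have hq2x : 0 < q2 x := (hq2 x).lt_of_ne fun h => by
        rw [← h, mul_zero] at hq0; exact lt_irrefl _ hq0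
      rcases (hp x).eq_or_lt with hpx | hpx
      · simp [← hpx, Real.zero_rpow ha.ne']
      · have hu : 0 < p x * (q1 x * q2 x) ^ (α - 1) :=
          mul_pos hpx (Real.rpow_pos_of_pos hq0 _)
        refine eq_of_log_eq (Real.rpow_pos_of_pos hpx _) (by positivity) ?_
        rw [Real.log_rpow hpx,
          Real.log_mul (by positivity : ((p x * (q1 x * q2 x) ^ (α - 1)) ^ a
              * (q1 x ^ α) ^ b) ≠ 0) (by positivity : (q2 x ^ α) ^ b ≠ 0),
          Real.log_mul (by positivity : ((p x * (q1 x * q2 x) ^ (α - 1)) ^ a) ≠ 0)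
            (by positivity : ((q1 x ^ α) ^ b) ≠ 0),
          Real.log_rpow hu, Real.log_rpow (Real.rpow_pos_of_pos hq1x _),
          Real.log_rpow (Real.rpow_pos_of_pos hq2x _),
          Real.log_mul hpx.ne' (Real.rpow_pos_of_pos hq0 _).ne',
          Real.log_rpow hq0, Real.log_rpow hq1x, Real.log_rpow hq2x,
          Real.log_mul hq1x.ne' hq2x.ne', ha_def, hb_def]
        field_simp
        ring
  have hhold : ∑ x, p x ^ a
      ≤ (∑ x, p x * (q1 x * q2 x) ^ (α - 1)) ^ a * (∑ x, q1 x ^ α) ^ b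
        * (∑ x, q2 x ^ α) ^ b := by
    calc ∑ x, p x ^ a
        = ∑ x, (p x * (q1 x * q2 x) ^ (α - 1)) ^ a * (q1 x ^ α) ^ b * (q2 x ^ α) ^ b :=
          Finset.sum_congr rfl fun x _ => hpt x
      _ ≤ _ := myHolder3 _ _ _
            (fun x => mul_nonneg (hp x) (Real.rpow_nonneg (mul_nonneg (hq1 x) (hq2 x)) _))
            (fun x => Real.rpow_nonneg (hq1 x) _)
            (fun x => Real.rpow_nonneg (hq2 x) _) ha hb hb habc
  have hlog : Real.log (∑ x, p x ^ a)
      ≤ a * Real.log (∑ x, p x * (q1 x * q2 x) ^ (α - 1))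
        + b * Real.log (∑ x, q1 x ^ α) + b * Real.log (∑ x, q2 x ^ α) := by
    calc Real.log (∑ x, p x ^ a) ≤ Real.log ((∑ x, p x * (q1 x * q2 x) ^ (α - 1)) ^ a
          * (∑ x, q1 x ^ α) ^ b * (∑ x, q2 x ^ α) ^ b) := Real.log_le_log hs hhold
      _ = _ := by
          rw [Real.log_mul (by positivity) (by positivity),
            Real.log_mul (by positivity) (by positivity),
            Real.log_rpow ht, Real.log_rpow hb1, Real.log_rpow hb2]
  have hcoef : (0:ℝ) ≤ (2 - α) / (1 - α) := le_of_lt (div_pos h2α h1α)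
  have hmul := mul_le_mul_of_nonneg_left hlog hcoef
  have e1 : (2 - α) / (1 - α) * a = α / (1 - α) := by
    rw [ha_def]; field_simp
  have e2 : (2 - α) / (1 - α) * b = 1 := by
    rw [hb_def]; field_simp
  calc (2 - α) / (1 - α) * Real.log (∑ x, p x ^ a)
      ≤ (2 - α) / (1 - α) * (a * Real.log (∑ x, p x * (q1 x * q2 x) ^ (α - 1))
          + b * Real.log (∑ x, q1 x ^ α) + b * Real.log (∑ x, q2 x ^ α)) := hmul
    _ = ((2 - α) / (1 - α) * a) * Real.log (∑ x, p x * (q1 x * q2 x) ^ (α - 1))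
          + ((2 - α) / (1 - α) * b) * Real.log (∑ x, q1 x ^ α)
          + ((2 - α) / (1 - α) * b) * Real.log (∑ x, q2 x ^ α) := by ring
    _ = _ := by rw [e1, e2]; ring

/-- Core inequality for `1 < α < 2`. -/
lemma real_core_gt1 {α : ℝ} (hα : 1 < α) (hα2 : α < 2) (p q1 q2 : X → ℝ)
    (hp : ∀ x, 0 ≤ p x) (hq1 : ∀ x, 0 ≤ q1 x) (hq2 : ∀ x, 0 ≤ q2 x)
    (hs : 0 < ∑ x, p x ^ (α / (2 - α)))
    (ht : 0 < ∑ x, p x * (q1 x * q2 x) ^ (α - 1))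
    (hb1 : 0 < ∑ x, q1 x ^ α) (hb2 : 0 < ∑ x, q2 x ^ α) :
    (2 - α) / (1 - α) * Real.log (∑ x, p x ^ (α / (2 - α)))
      ≤ α / (1 - α) * Real.log (∑ x, p x * (q1 x * q2 x) ^ (α - 1))
        + (Real.log (∑ x, q1 x ^ α) + Real.log (∑ x, q2 x ^ α)) := by
  have h2α : (0:ℝ) < 2 - α := by linarith
  have h1α : (0:ℝ) < α - 1 := by linarith
  have hα0 : (0:ℝ) < α := by linarith
  set a : ℝ := (2 - α) / α with ha_def
  set b : ℝ := (α - 1) / α with hb_def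
  have ha : 0 < a := div_pos h2α hα0
  have hb : 0 < b := div_pos h1α hα0
  have habc : a + b + b = 1 := by rw [ha_def, hb_def]; field_simp; ring
  have hpt : ∀ x, p x * (q1 x * q2 x) ^ (α - 1)
      = (p x ^ (α / (2 - α))) ^ a * (q1 x ^ α) ^ b * (q2 x ^ α) ^ b := by
    intro x
    rcases (hq1 x).eq_or_lt with hq1x | hq1x
    · simp [← hq1x, Real.zero_rpow (show α - 1 ≠ 0 by intro h; linarith),
        Real.zero_rpow hα0.ne', Real.zero_rpow hb.ne']
    rcases (hq2 x).eq_or_lt with hq2x | hq2x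
    · simp [← hq2x, Real.zero_rpow (show α - 1 ≠ 0 by intro h; linarith),
        Real.zero_rpow hα0.ne', Real.zero_rpow hb.ne']
    rcases (hp x).eq_or_lt with hpx | hpx
    · simp [← hpx, Real.zero_rpow (show α / (2 - α) ≠ 0 by positivity),
        Real.zero_rpow ha.ne']
    have hq0 : 0 < q1 x * q2 x := mul_pos hq1x hq2x
    refine eq_of_log_eq (mul_pos hpx (Real.rpow_pos_of_pos hq0 _)) (by positivity) ?_
    rw [Real.log_mul hpx.ne' (Real.rpow_pos_of_pos hq0 _).ne', Real.log_rpow hq0,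
      Real.log_mul hq1x.ne' hq2x.ne',
      Real.log_mul (by positivity : ((p x ^ (α / (2 - α))) ^ a * (q1 x ^ α) ^ b) ≠ 0)
        (by positivity : (q2 x ^ α) ^ b ≠ 0),
      Real.log_mul (by positivity : ((p x ^ (α / (2 - α))) ^ a) ≠ 0)
        (by positivity : ((q1 x ^ α) ^ b) ≠ 0),
      Real.log_rpow (Real.rpow_pos_of_pos hpx _), Real.log_rpow hpx,
      Real.log_rpow (Real.rpow_pos_of_pos hq1x _), Real.log_rpow hq1x,
      Real.log_rpow (Real.rpow_pos_of_pos hq2x _), Real.log_rpow hq2x,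
      ha_def, hb_def]
    field_simp
    ring
  have hhold : ∑ x, p x * (q1 x * q2 x) ^ (α - 1)
      ≤ (∑ x, p x ^ (α / (2 - α))) ^ a * (∑ x, q1 x ^ α) ^ b * (∑ x, q2 x ^ α) ^ b := by
    calc ∑ x, p x * (q1 x * q2 x) ^ (α - 1)
        = ∑ x, (p x ^ (α / (2 - α))) ^ a * (q1 x ^ α) ^ b * (q2 x ^ α) ^ b :=
          Finset.sum_congr rfl fun x _ => hpt x
      _ ≤ _ := myHolder3 _ _ _ (fun x => Real.rpow_nonneg (hp x) _)
            (fun x => Real.rpow_nonneg (hq1 x) _)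
            (fun x => Real.rpow_nonneg (hq2 x) _) ha hb hb habc
  have hlog : Real.log (∑ x, p x * (q1 x * q2 x) ^ (α - 1))
      ≤ a * Real.log (∑ x, p x ^ (α / (2 - α)))
        + b * Real.log (∑ x, q1 x ^ α) + b * Real.log (∑ x, q2 x ^ α) := by
    calc Real.log (∑ x, p x * (q1 x * q2 x) ^ (α - 1))
        ≤ Real.log ((∑ x, p x ^ (α / (2 - α))) ^ a * (∑ x, q1 x ^ α) ^ b
            * (∑ x, q2 x ^ α) ^ b) := Real.log_le_log ht hhold
      _ = _ := by
          rw [Real.log_mul (by positivity) (by positivity),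
            Real.log_mul (by positivity) (by positivity),
            Real.log_rpow hs, Real.log_rpow hb1, Real.log_rpow hb2]
  have hcoef : α / (1 - α) ≤ 0 := by
    apply div_nonpos_of_nonneg_of_nonpos hα0.le
    linarith
  have hmul := mul_le_mul_of_nonpos_left hlog hcoef
  have hne : (1:ℝ) - α ≠ 0 := by intro h; linarith
  have e1 : α / (1 - α) * a = (2 - α) / (1 - α) := by
    rw [ha_def]; field_simp
  have e2 : α / (1 - α) * b = -1 := by
    rw [hb_def]
    field_simp
    ring
  calc (2 - α) / (1 - α) * Real.log (∑ x, p x ^ (α / (2 - α)))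
      = (α / (1 - α) * a) * Real.log (∑ x, p x ^ (α / (2 - α))) := by rw [e1]
    _ ≤ α / (1 - α) * Real.log (∑ x, p x * (q1 x * q2 x) ^ (α - 1))
          - (α / (1 - α) * b) * Real.log (∑ x, q1 x ^ α)
          - (α / (1 - α) * b) * Real.log (∑ x, q2 x ^ α) := by nlinarith [hmul]
    _ = _ := by rw [e2]; ring

/-- Core inequality for `2 ≤ α`. -/
lemma real_core_ge2 {α : ℝ} (hα : 2 ≤ α) (p q1 q2 : X → ℝ) {m : ℝ} (hm0 : 0 < m)
    (hm : ∀ x, p x ≤ m)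
    (hp : ∀ x, 0 ≤ p x) (hq1 : ∀ x, 0 ≤ q1 x) (hq2 : ∀ x, 0 ≤ q2 x)
    (ht : 0 < ∑ x, p x * (q1 x * q2 x) ^ (α - 1))
    (hb1 : 0 < ∑ x, q1 x ^ α) (hb2 : 0 < ∑ x, q2 x ^ α) :
    α / (1 - α) * Real.log m
      ≤ α / (1 - α) * Real.log (∑ x, p x * (q1 x * q2 x) ^ (α - 1))
        + (Real.log (∑ x, q1 x ^ α) + Real.log (∑ x, q2 x ^ α)) := by
  have hα0 : (0:ℝ) < α := by linarith
  have h1α : (0:ℝ) < α - 1 := by linarith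
  set w : ℝ := (α - 1) / α with hw_def
  have hw : 0 < w := div_pos h1α hα0
  have h2w : 1 ≤ 2 * w := by
    have e : 2 * w = 2 * (α - 1) / α := by rw [hw_def]; ring
    rw [e, le_div_iff₀ hα0]; linarith
  have hpt : ∀ x, (q1 x * q2 x) ^ (α - 1)
      = ((q1 x ^ α) ^ (2 * w)) ^ (1/2 : ℝ) * ((q2 x ^ α) ^ (2 * w)) ^ (1/2 : ℝ) := by
    intro x
    rcases (hq1 x).eq_or_lt with hq1x | hq1x
    · simp [← hq1x, Real.zero_rpow (show α - 1 ≠ 0 by intro h; linarith),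
        Real.zero_rpow hα0.ne', Real.zero_rpow (show 2 * w ≠ 0 by positivity),
        Real.zero_rpow (show (1/2 : ℝ) ≠ 0 by norm_num)]
    rcases (hq2 x).eq_or_lt with hq2x | hq2x
    · simp [← hq2x, Real.zero_rpow (show α - 1 ≠ 0 by intro h; linarith),
        Real.zero_rpow hα0.ne', Real.zero_rpow (show 2 * w ≠ 0 by positivity),
        Real.zero_rpow (show (1/2 : ℝ) ≠ 0 by norm_num)]
    have hq0 : 0 < q1 x * q2 x := mul_pos hq1x hq2x
    refine eq_of_log_eq (Real.rpow_pos_of_pos hq0 _) (by positivity) ?_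
    rw [Real.log_rpow hq0, Real.log_mul hq1x.ne' hq2x.ne',
      Real.log_mul (by positivity : (((q1 x ^ α) ^ (2 * w)) ^ (1/2 : ℝ)) ≠ 0)
        (by positivity : (((q2 x ^ α) ^ (2 * w)) ^ (1/2 : ℝ)) ≠ 0),
      Real.log_rpow (by positivity : (0:ℝ) < (q1 x ^ α) ^ (2 * w)),
      Real.log_rpow (by positivity : (0:ℝ) < (q2 x ^ α) ^ (2 * w)),
      Real.log_rpow (by positivity : (0:ℝ) < q1 x ^ α),
      Real.log_rpow (by positivity : (0:ℝ) < q2 x ^ α),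
      Real.log_rpow hq1x, Real.log_rpow hq2x, hw_def]
    field_simp
  have hsum1 : ∑ x, (q1 x ^ α) ^ (2 * w) ≤ (∑ x, q1 x ^ α) ^ (2 * w) :=
    mySum_rpow_le _ (fun x => Real.rpow_nonneg (hq1 x) _) h2w
  have hsum2 : ∑ x, (q2 x ^ α) ^ (2 * w) ≤ (∑ x, q2 x ^ α) ^ (2 * w) :=
    mySum_rpow_le _ (fun x => Real.rpow_nonneg (hq2 x) _) h2w
  have hchain : ∑ x, (q1 x * q2 x) ^ (α - 1)
      ≤ (∑ x, q1 x ^ α) ^ w * (∑ x, q2 x ^ α) ^ w := by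
    calc ∑ x, (q1 x * q2 x) ^ (α - 1)
        = ∑ x, ((q1 x ^ α) ^ (2 * w)) ^ (1/2 : ℝ) * ((q2 x ^ α) ^ (2 * w)) ^ (1/2 : ℝ) :=
          Finset.sum_congr rfl fun x _ => hpt x
      _ ≤ (∑ x, (q1 x ^ α) ^ (2 * w)) ^ (1/2 : ℝ) * (∑ x, (q2 x ^ α) ^ (2 * w)) ^ (1/2 : ℝ) :=
          myHolder2 _ _ (fun x => Real.rpow_nonneg (Real.rpow_nonneg (hq1 x) _) _)
            (fun x => Real.rpow_nonneg (Real.rpow_nonneg (hq2 x) _) _)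
            (by norm_num) (by norm_num) (by norm_num)
      _ ≤ ((∑ x, q1 x ^ α) ^ (2 * w)) ^ (1/2 : ℝ) * ((∑ x, q2 x ^ α) ^ (2 * w)) ^ (1/2 : ℝ) := by
          apply mul_le_mul
          · exact Real.rpow_le_rpow (Finset.sum_nonneg fun x _ =>
              Real.rpow_nonneg (Real.rpow_nonneg (hq1 x) _) _) hsum1 (by norm_num)
          · exact Real.rpow_le_rpow (Finset.sum_nonneg fun x _ =>
              Real.rpow_nonneg (Real.rpow_nonneg (hq2 x) _) _) hsum2 (by norm_num)
          · exact Real.rpow_nonneg (Finset.sum_nonneg fun x _ =>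
              Real.rpow_nonneg (Real.rpow_nonneg (hq2 x) _) _) _
          · exact Real.rpow_nonneg (Real.rpow_nonneg hb1.le _) _
      _ = (∑ x, q1 x ^ α) ^ w * (∑ x, q2 x ^ α) ^ w := by
          rw [← Real.rpow_mul hb1.le, ← Real.rpow_mul hb2.le,
            show 2 * w * (1/2 : ℝ) = w by ring]
  have htm : ∑ x, p x * (q1 x * q2 x) ^ (α - 1)
      ≤ m * ((∑ x, q1 x ^ α) ^ w * (∑ x, q2 x ^ α) ^ w) := by
    calc ∑ x, p x * (q1 x * q2 x) ^ (α - 1)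
        ≤ ∑ x, m * (q1 x * q2 x) ^ (α - 1) := Finset.sum_le_sum fun x _ =>
          mul_le_mul_of_nonneg_right (hm x)
            (Real.rpow_nonneg (mul_nonneg (hq1 x) (hq2 x)) _)
      _ = m * ∑ x, (q1 x * q2 x) ^ (α - 1) := by rw [Finset.mul_sum]
      _ ≤ _ := mul_le_mul_of_nonneg_left hchain hm0.le
  have hlog : Real.log (∑ x, p x * (q1 x * q2 x) ^ (α - 1))
      ≤ Real.log m + (w * Real.log (∑ x, q1 x ^ α) + w * Real.log (∑ x, q2 x ^ α)) := by
    calc Real.log (∑ x, p x * (q1 x * q2 x) ^ (α - 1))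
        ≤ Real.log (m * ((∑ x, q1 x ^ α) ^ w * (∑ x, q2 x ^ α) ^ w)) :=
          Real.log_le_log ht htm
      _ = _ := by
          rw [Real.log_mul hm0.ne' (by positivity),
            Real.log_mul (by positivity) (by positivity),
            Real.log_rpow hb1, Real.log_rpow hb2]
  have hcoef : α / (1 - α) ≤ 0 := by
    apply div_nonpos_of_nonneg_of_nonpos hα0.le
    linarith
  have hmul := mul_le_mul_of_nonpos_left hlog hcoef
  have e2 : α / (1 - α) * w = -1 := by
    rw [hw_def]
    have h1 : (1:ℝ) - α ≠ 0 := by intro h; linarith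
    field_simp
    ring
  calc α / (1 - α) * Real.log m
      = α / (1 - α) * (Real.log m + (w * Real.log (∑ x, q1 x ^ α)
          + w * Real.log (∑ x, q2 x ^ α)))
        - (α / (1 - α) * w) * Real.log (∑ x, q1 x ^ α)
        - (α / (1 - α) * w) * Real.log (∑ x, q2 x ^ α) := by ring
    _ ≤ α / (1 - α) * Real.log (∑ x, p x * (q1 x * q2 x) ^ (α - 1))
        - (α / (1 - α) * w) * Real.log (∑ x, q1 x ^ α)
        - (α / (1 - α) * w) * Real.log (∑ x, q2 x ^ α) := by linarith [hmul]
    _ = _ := by rw [e2]; ring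

end CoreIneq
section Bridge
set_option linter.unusedSectionVars false
variable {X : Type*} [Fintype X] [DecidableEq X]

lemma rpow_ne_top' {a : ℝ≥0∞} (h0 : a ≠ 0) (ht : a ≠ ⊤) (e : ℝ) : a ^ e ≠ ⊤ := by
  simp [ENNReal.rpow_eq_top_iff, h0, ht]

lemma rpow_ne_zero' {a : ℝ≥0∞} (h0 : a ≠ 0) (ht : a ≠ ⊤) (e : ℝ) : a ^ e ≠ 0 := by
  simp [ENNReal.rpow_eq_zero_iff, h0, ht]

lemma toReal_sum' (f : X → ℝ≥0∞) (h : ∑ x, f x ≠ ⊤) :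
    (∑ x, f x).toReal = ∑ x, (f x).toReal :=
  ENNReal.toReal_sum fun a _ => ENNReal.lt_top_of_sum_ne_top h (mem_univ a) |>.ne

lemma toReal_T (P Q1 Q2 : X → ℝ≥0∞) (α : ℝ)
    (h : ∑ x, P x * (Q1 x * Q2 x) ^ (α - 1) ≠ ⊤) :
    (∑ x, P x * (Q1 x * Q2 x) ^ (α - 1)).toReal
      = ∑ x, (P x).toReal * ((Q1 x).toReal * (Q2 x).toReal) ^ (α - 1) := by
  rw [toReal_sum' _ h]
  exact Finset.sum_congr rfl fun x _ => by
    rw [ENNReal.toReal_mul, ← ENNReal.toReal_rpow, ENNReal.toReal_mul]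

lemma toReal_Spow (P : X → ℝ≥0∞) (γ : ℝ) (h : ∑ x, P x ^ γ ≠ ⊤) :
    (∑ x, P x ^ γ).toReal = ∑ x, (P x).toReal ^ γ := by
  rw [toReal_sum' _ h]
  exact Finset.sum_congr rfl fun x _ => (ENNReal.toReal_rpow _ _).symm

lemma toReal_guard {P Q1 Q2 : X → ℝ≥0∞} {α : ℝ} (hα1 : α < 1)
    (hQ1 : ∑ x, Q1 x = 1) (hQ2 : ∑ x, Q2 x = 1)
    (h : ∑ x, P x * (Q1 x * Q2 x) ^ (α - 1) ≠ ⊤) :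
    ∀ x, (Q1 x).toReal * (Q2 x).toReal = 0 → (P x).toReal = 0 := by
  intro x hx
  have hQ1t : Q1 x ≠ ⊤ := ne_top_of_le_ne_top ENNReal.one_ne_top (sum_le_one_of_sum_eq_one hQ1 x)
  have hQ2t : Q2 x ≠ ⊤ := ne_top_of_le_ne_top ENNReal.one_ne_top (sum_le_one_of_sum_eq_one hQ2 x)
  have hmul : (Q1 x * Q2 x).toReal = 0 := by rw [ENNReal.toReal_mul]; exact hx
  have hq0 : Q1 x * Q2 x = 0 := by
    rcases ENNReal.toReal_eq_zero_iff _ |>.1 hmul with h0 | h0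
    · exact h0
    · exact absurd h0 (ENNReal.mul_ne_top hQ1t hQ2t)
  have hterm := (ENNReal.lt_top_of_sum_ne_top h (mem_univ x)).ne
  by_contra hP
  have hPx : P x ≠ 0 := fun h0 => hP (by rw [h0]; simp)
  rw [hq0] at hterm
  have : (0 : ℝ≥0∞) ^ (α - 1) = ⊤ := by
    rw [ENNReal.rpow_eq_top_iff]
    exact Or.inl ⟨rfl, by linarith⟩
  rw [this, ENNReal.mul_top hPx] at hterm
  exact hterm rfl

lemma T_ne_top_of_gt1 {P Q1 Q2 : X → ℝ≥0∞} {α : ℝ} (hα1 : 1 < α)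
    (hP : ∑ x, P x = 1) (hQ1 : ∑ x, Q1 x = 1) (hQ2 : ∑ x, Q2 x = 1) :
    ∑ x, P x * (Q1 x * Q2 x) ^ (α - 1) ≠ ⊤ := by
  rw [Ne, ENNReal.sum_eq_top]
  rintro ⟨x, -, hx⟩
  have hQ1t : Q1 x ≠ ⊤ := ne_top_of_le_ne_top ENNReal.one_ne_top (sum_le_one_of_sum_eq_one hQ1 x)
  have hQ2t : Q2 x ≠ ⊤ := ne_top_of_le_ne_top ENNReal.one_ne_top (sum_le_one_of_sum_eq_one hQ2 x)
  have hPt : P x ≠ ⊤ := ne_top_of_le_ne_top ENNReal.one_ne_top (sum_le_one_of_sum_eq_one hP x)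
  exact (ENNReal.mul_ne_top hPt (ENNReal.rpow_ne_top_of_nonneg (by linarith)
    (ENNReal.mul_ne_top hQ1t hQ2t))) hx

lemma T_ne_zero_of_lt1 {P Q1 Q2 : X → ℝ≥0∞} {α : ℝ} (hα1 : α < 1)
    (hP : ∑ x, P x = 1) (hQ1 : ∑ x, Q1 x = 1) (hQ2 : ∑ x, Q2 x = 1) :
    ∑ x, P x * (Q1 x * Q2 x) ^ (α - 1) ≠ 0 := by
  obtain ⟨x0, hx0⟩ := exists_ne_zero_of_sum_eq_one hP
  intro h
  rw [Finset.sum_eq_zero_iff] at h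
  have hx := h x0 (mem_univ x0)
  rcases mul_eq_zero.1 hx with h0 | h0
  · exact hx0 h0
  · have hQ1t : Q1 x0 ≠ ⊤ :=
      ne_top_of_le_ne_top ENNReal.one_ne_top (sum_le_one_of_sum_eq_one hQ1 x0)
    have hQ2t : Q2 x0 ≠ ⊤ :=
      ne_top_of_le_ne_top ENNReal.one_ne_top (sum_le_one_of_sum_eq_one hQ2 x0)
    rw [ENNReal.rpow_eq_zero_iff] at h0
    rcases h0 with ⟨_, h1⟩ | ⟨h1, _⟩
    · linarith
    · exact (ENNReal.mul_ne_top hQ1t hQ2t) h1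

/-- In the `⊤` case the goal is trivial. -/
lemma le_top_expr (y : EReal) (r1 r2 r3 : ℝ) :
    y ≤ (⊤ : EReal) + ((r1 : EReal) + (r2 : EReal)) - ((r3 : ℝ) : EReal) := by
  rw [← EReal.coe_add, EReal.top_add_coe, EReal.top_sub_coe]
  exact le_top

/-- Lower bound for `α ∈ (0,2) \ {1}`. -/
lemma lower_lt2 {α : ℝ} (hα : 0 < α) (hα1 : α ≠ 1) (hα2 : α < 2)
    (P Q1 Q2 : X → ℝ≥0∞) (hP : ∑ x, P x = 1) (hQ1 : ∑ x, Q1 x = 1) (hQ2 : ∑ x, Q2 x = 1) :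
    (((2 - α) / (1 - α) * Real.log (∑ x, (P x).toReal ^ (α / (2 - α)))
        - (1 - α)⁻¹ * Real.log (∑ x, (P x).toReal ^ α) : ℝ) : EReal)
      ≤ relAlphaEnt α (fun p : X × X => if p.1 = p.2 then P p.1 else 0)
          (fun p => Q1 p.1 * Q2 p.2) := by
  have h2α : (0:ℝ) < 2 - α := by linarith
  have hβ : 0 < α / (2 - α) := div_pos hα h2α
  rw [relAlphaEnt_prod P Q1 Q2 hα hα1]
  have hB10 := sum_rpow_ne_zero hQ1 hα
  have hB1t := sum_rpow_ne_top hQ1 hα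
  have hB20 := sum_rpow_ne_zero hQ2 hα
  have hB2t := sum_rpow_ne_top hQ2 hα
  have hC0 := sum_rpow_ne_zero hP hα
  have hCt := sum_rpow_ne_top hP hα
  have hS0 := sum_rpow_ne_zero hP hβ
  have hSt := sum_rpow_ne_top hP hβ
  have hsr : 0 < ∑ x, (P x).toReal ^ (α / (2 - α)) := by
    rw [← toReal_Spow P _ hSt]; exact ENNReal.toReal_pos hS0 hSt
  have hb1r : 0 < ∑ x, (Q1 x).toReal ^ α := by
    rw [← toReal_Spow Q1 _ hB1t]; exact ENNReal.toReal_pos hB10 hB1t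
  have hb2r : 0 < ∑ x, (Q2 x).toReal ^ α := by
    rw [← toReal_Spow Q2 _ hB2t]; exact ENNReal.toReal_pos hB20 hB2t
  rcases lt_or_gt_of_ne hα1 with hlt | hgt
  · -- α < 1
    by_cases hTt : ∑ x, P x * (Q1 x * Q2 x) ^ (α - 1) = ⊤
    · rw [hTt, ENNReal.log_top, EReal.coe_mul_top_of_pos
        (by apply div_pos hα; linarith : (0:ℝ) < α / (1 - α)),
        ENNReal.log_pos_real hB10 hB1t, ENNReal.log_pos_real hB20 hB2t,
        ENNReal.log_pos_real hC0 hCt, ← EReal.coe_mul]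
      exact le_top_expr _ _ _ _
    · have hT0 := T_ne_zero_of_lt1 hlt hP hQ1 hQ2
      rw [ereal_expr_coe hT0 hTt hB10 hB1t hB20 hB2t hC0 hCt]
      rw [EReal.coe_le_coe_iff]
      rw [toReal_T P Q1 Q2 α hTt, toReal_Spow Q1 α hB1t, toReal_Spow Q2 α hB2t,
        toReal_Spow P α hCt]
      have htr : 0 < ∑ x, (P x).toReal * ((Q1 x).toReal * (Q2 x).toReal) ^ (α - 1) := by
        rw [← toReal_T P Q1 Q2 α hTt]; exact ENNReal.toReal_pos hT0 hTt
      have hcore := real_core_lt1 hα hlt (fun x => (P x).toReal) (fun x => (Q1 x).toReal)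
        (fun x => (Q2 x).toReal) (fun x => ENNReal.toReal_nonneg)
        (fun x => ENNReal.toReal_nonneg) (fun x => ENNReal.toReal_nonneg)
        (toReal_guard hlt hQ1 hQ2 hTt) hsr htr hb1r hb2r
      linarith
  · -- 1 < α < 2
    have hTt := T_ne_top_of_gt1 hgt hP hQ1 hQ2
    by_cases hT0 : ∑ x, P x * (Q1 x * Q2 x) ^ (α - 1) = 0
    · rw [hT0, ENNReal.log_zero, EReal.coe_mul_bot_of_neg
        (by apply div_neg_of_pos_of_neg hα; linarith : α / (1 - α) < 0),
        ENNReal.log_pos_real hB10 hB1t, ENNReal.log_pos_real hB20 hB2t,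
        ENNReal.log_pos_real hC0 hCt, ← EReal.coe_mul]
      exact le_top_expr _ _ _ _
    · rw [ereal_expr_coe hT0 hTt hB10 hB1t hB20 hB2t hC0 hCt]
      rw [EReal.coe_le_coe_iff]
      rw [toReal_T P Q1 Q2 α hTt, toReal_Spow Q1 α hB1t, toReal_Spow Q2 α hB2t,
        toReal_Spow P α hCt]
      have hcore := real_core_gt1 hgt hα2 (fun x => (P x).toReal) (fun x => (Q1 x).toReal)
        (fun x => (Q2 x).toReal) (fun x => ENNReal.toReal_nonneg)
        (fun x => ENNReal.toReal_nonneg) (fun x => ENNReal.toReal_nonneg)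
        hsr (by rw [← toReal_T P Q1 Q2 α hTt]; exact ENNReal.toReal_pos hT0 hTt) hb1r hb2r
      linarith

/-- Lower bound for `α ≥ 2`. -/
lemma lower_ge2 {α : ℝ} (hα : 2 ≤ α)
    (P Q1 Q2 : X → ℝ≥0∞) (hP : ∑ x, P x = 1) (hQ1 : ∑ x, Q1 x = 1) (hQ2 : ∑ x, Q2 x = 1) :
    ((α / (1 - α) * Real.log (⨆ x, P x).toReal
        - (1 - α)⁻¹ * Real.log (∑ x, (P x).toReal ^ α) : ℝ) : EReal)
      ≤ relAlphaEnt α (fun p : X × X => if p.1 = p.2 then P p.1 else 0)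
          (fun p => Q1 p.1 * Q2 p.2) := by
  have hα0 : (0:ℝ) < α := by linarith
  have hα1 : α ≠ 1 := by intro h; rw [h] at hα; linarith
  have hgt : 1 < α := by linarith
  rw [relAlphaEnt_prod P Q1 Q2 hα0 hα1]
  have hB10 := sum_rpow_ne_zero hQ1 hα0
  have hB1t := sum_rpow_ne_top hQ1 hα0
  have hB20 := sum_rpow_ne_zero hQ2 hα0
  have hB2t := sum_rpow_ne_top hQ2 hα0
  have hC0 := sum_rpow_ne_zero hP hα0
  have hCt := sum_rpow_ne_top hP hα0
  obtain ⟨x0, hx0⟩ := exists_ne_zero_of_sum_eq_one hP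
  have hMt : (⨆ x, P x) ≠ ⊤ := by
    refine ne_top_of_le_ne_top ENNReal.one_ne_top (iSup_le fun x => ?_)
    exact sum_le_one_of_sum_eq_one hP x
  have hM0 : (⨆ x, P x) ≠ 0 := by
    intro h
    exact hx0 (le_antisymm (h ▸ le_iSup P x0) zero_le)
  have hmr : 0 < (⨆ x, P x).toReal := ENNReal.toReal_pos hM0 hMt
  have hm : ∀ x, (P x).toReal ≤ (⨆ x, P x).toReal :=
    fun x => ENNReal.toReal_mono hMt (le_iSup P x)
  have hb1r : 0 < ∑ x, (Q1 x).toReal ^ α := by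
    rw [← toReal_Spow Q1 _ hB1t]; exact ENNReal.toReal_pos hB10 hB1t
  have hb2r : 0 < ∑ x, (Q2 x).toReal ^ α := by
    rw [← toReal_Spow Q2 _ hB2t]; exact ENNReal.toReal_pos hB20 hB2t
  have hTt := T_ne_top_of_gt1 hgt hP hQ1 hQ2
  by_cases hT0 : ∑ x, P x * (Q1 x * Q2 x) ^ (α - 1) = 0
  · rw [hT0, ENNReal.log_zero, EReal.coe_mul_bot_of_neg
      (by apply div_neg_of_pos_of_neg hα0; linarith : α / (1 - α) < 0),
      ENNReal.log_pos_real hB10 hB1t, ENNReal.log_pos_real hB20 hB2t,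
      ENNReal.log_pos_real hC0 hCt, ← EReal.coe_mul]
    exact le_top_expr _ _ _ _
  · rw [ereal_expr_coe hT0 hTt hB10 hB1t hB20 hB2t hC0 hCt]
    rw [EReal.coe_le_coe_iff]
    rw [toReal_T P Q1 Q2 α hTt, toReal_Spow Q1 α hB1t, toReal_Spow Q2 α hB2t,
      toReal_Spow P α hCt]
    have hcore := real_core_ge2 hα (fun x => (P x).toReal) (fun x => (Q1 x).toReal)
      (fun x => (Q2 x).toReal) hmr hm (fun x => ENNReal.toReal_nonneg)
      (fun x => ENNReal.toReal_nonneg) (fun x => ENNReal.toReal_nonneg)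
      (by rw [← toReal_T P Q1 Q2 α hTt]; exact ENNReal.toReal_pos hT0 hTt) hb1r hb2r
    linarith

end Bridge
section Value
set_option linter.unusedSectionVars false
variable {X : Type*} [Fintype X] [DecidableEq X]

lemma ennreal_sq (a : ℝ≥0∞) : a * a = a ^ (2:ℝ) := by
  rw [show (2:ℝ) = ((2:ℕ):ℝ) by norm_num, ENNReal.rpow_natCast, pow_two]

/-- Value of `relAlphaEnt` at the optimizer, `α ∈ (0,2) \ {1}`. -/
lemma value_lt2 {α : ℝ} (hα : 0 < α) (hα1 : α ≠ 1) (hα2 : α < 2)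
    (P : X → ℝ≥0∞) (hP : ∑ x, P x = 1) :
    ∃ Qs : X → ℝ≥0∞, (∑ x, Qs x = 1) ∧
      relAlphaEnt α (fun p : X × X => if p.1 = p.2 then P p.1 else 0)
          (fun p => Qs p.1 * Qs p.2)
        = (((2 - α) / (1 - α) * Real.log (∑ x, (P x).toReal ^ (α / (2 - α)))
            - (1 - α)⁻¹ * Real.log (∑ x, (P x).toReal ^ α) : ℝ) : EReal) := by
  have h2α : (0:ℝ) < 2 - α := by linarith
  have h1α : (1:ℝ) - α ≠ 0 := fun h => hα1 (by linarith)
  set γ : ℝ := (2 - α)⁻¹ with hγ_def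
  have hγ : 0 < γ := inv_pos.2 h2α
  have hβ : 0 < α / (2 - α) := div_pos hα h2α
  have hZ0 := sum_rpow_ne_zero hP hγ
  have hZt := sum_rpow_ne_top hP hγ
  set Z : ℝ≥0∞ := ∑ x, P x ^ γ with hZ_def
  have hZinv0 : Z⁻¹ ≠ 0 := ENNReal.inv_ne_zero.2 hZt
  have hZinvt : Z⁻¹ ≠ ⊤ := ENNReal.inv_ne_top.2 hZ0
  have hS0 := sum_rpow_ne_zero hP hβ
  have hSt := sum_rpow_ne_top hP hβ
  have hC0 := sum_rpow_ne_zero hP hα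
  have hCt := sum_rpow_ne_top hP hα
  refine ⟨fun x => P x ^ γ * Z⁻¹, ?_, ?_⟩
  · rw [← Finset.sum_mul, ← hZ_def, ENNReal.mul_inv_cancel hZ0 hZt]
  have hPt : ∀ x, P x ≠ ⊤ :=
    fun x => ne_top_of_le_ne_top ENNReal.one_ne_top (sum_le_one_of_sum_eq_one hP x)
  have eT : ∑ x, P x * ((P x ^ γ * Z⁻¹) * (P x ^ γ * Z⁻¹)) ^ (α - 1)
      = (∑ x, P x ^ (α / (2 - α))) * (Z⁻¹) ^ (2 * (α - 1)) := by
    rw [Finset.sum_mul]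
    refine Finset.sum_congr rfl fun x _ => ?_
    have h1 : (P x ^ γ * Z⁻¹) * (P x ^ γ * Z⁻¹) = P x ^ (2 * γ) * (Z⁻¹) ^ (2:ℝ) := by
      rw [mul_mul_mul_comm, ← ennreal_sq]
      congr 1
      by_cases hx : P x = 0
      · rw [hx, ENNReal.zero_rpow_of_pos hγ, ENNReal.zero_rpow_of_pos (by positivity),
          mul_zero]
      · rw [← ENNReal.rpow_add γ γ hx (hPt x), show γ + γ = 2 * γ by ring]
    rw [h1, ENNReal.mul_rpow_of_ne_top (ENNReal.rpow_ne_top_of_nonneg (by positivity) (hPt x))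
        (rpow_ne_top' hZinv0 hZinvt _), ← ENNReal.rpow_mul, ← ENNReal.rpow_mul,
      ← mul_assoc]
    congr 1
    by_cases hx : P x = 0
    · rw [hx, ENNReal.zero_rpow_of_pos hβ, zero_mul]
    · have h2 := ENNReal.rpow_add 1 (2 * γ * (α - 1)) hx (hPt x)
      rw [ENNReal.rpow_one] at h2
      rw [← h2]
      congr 1
      rw [hγ_def]
      field_simp
      ring
  have eB : ∑ x, (P x ^ γ * Z⁻¹) ^ α = (∑ x, P x ^ (α / (2 - α))) * (Z⁻¹) ^ α := by
    rw [Finset.sum_mul]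
    refine Finset.sum_congr rfl fun x _ => ?_
    rw [ENNReal.mul_rpow_of_nonneg _ _ hα.le, ← ENNReal.rpow_mul]
    congr 2
    rw [hγ_def]
    field_simp
  beta_reduce
  rw [relAlphaEnt_prod P (fun x => P x ^ γ * Z⁻¹) (fun x => P x ^ γ * Z⁻¹) hα hα1, eT, eB,
    ereal_expr_coe (mul_ne_zero hS0 (rpow_ne_zero' hZinv0 hZinvt _))
      (ENNReal.mul_ne_top hSt (rpow_ne_top' hZinv0 hZinvt _))
      (mul_ne_zero hS0 (rpow_ne_zero' hZinv0 hZinvt _))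
      (ENNReal.mul_ne_top hSt (rpow_ne_top' hZinv0 hZinvt _))
      (mul_ne_zero hS0 (rpow_ne_zero' hZinv0 hZinvt _))
      (ENNReal.mul_ne_top hSt (rpow_ne_top' hZinv0 hZinvt _)) hC0 hCt,
    EReal.coe_eq_coe_iff]
  have hzr : 0 < Z.toReal := ENNReal.toReal_pos hZ0 hZt
  have hsr : 0 < (∑ x, P x ^ (α / (2 - α))).toReal := ENNReal.toReal_pos hS0 hSt
  have hinv : (Z⁻¹).toReal = Z.toReal⁻¹ := ENNReal.toReal_inv _
  have hw : ∀ e : ℝ, ((Z⁻¹) ^ e).toReal = Z.toReal⁻¹ ^ e := by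
    intro e
    rw [← ENNReal.toReal_rpow, hinv]
  have hlogmul : ∀ e : ℝ,
      Real.log (((∑ x, P x ^ (α / (2 - α))) * (Z⁻¹) ^ e).toReal)
        = Real.log (∑ x, (P x).toReal ^ (α / (2 - α))) - e * Real.log Z.toReal := by
    intro e
    rw [ENNReal.toReal_mul, hw e,
      Real.log_mul (by positivity) (by positivity : (Z.toReal⁻¹ ^ e) ≠ 0),
      Real.log_rpow (by positivity), Real.log_inv, toReal_Spow P _ hSt]
    ring
  rw [hlogmul, hlogmul, toReal_Spow P α hCt]
  set L1 := Real.log (∑ x, (P x).toReal ^ (α / (2 - α)))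
  set L2 := Real.log (∑ x, (P x).toReal ^ α)
  set L3 := Real.log Z.toReal
  field_simp
  ring

/-- Value of `relAlphaEnt` at a point mass on the max, `α ≥ 2`. -/
lemma value_ge2 {α : ℝ} (hα : 2 ≤ α) (P : X → ℝ≥0∞) (hP : ∑ x, P x = 1) :
    ∃ Qs : X → ℝ≥0∞, (∑ x, Qs x = 1) ∧
      relAlphaEnt α (fun p : X × X => if p.1 = p.2 then P p.1 else 0)
          (fun p => Qs p.1 * Qs p.2)
        = ((α / (1 - α) * Real.log (⨆ x, P x).toReal
            - (1 - α)⁻¹ * Real.log (∑ x, (P x).toReal ^ α) : ℝ) : EReal) := by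
  have hα0 : (0:ℝ) < α := by linarith
  have hα1 : α ≠ 1 := fun h => by rw [h] at hα; linarith
  have h1α : (0:ℝ) < α - 1 := by
    rcases hα.lt_or_eq with h | h
    · linarith
    · linarith
  have hC0 := sum_rpow_ne_zero hP hα0
  have hCt := sum_rpow_ne_top hP hα0
  obtain ⟨x0, hx0⟩ := exists_ne_zero_of_sum_eq_one hP
  obtain ⟨xm, -, hxm⟩ := Finset.exists_max_image univ P ⟨x0, mem_univ x0⟩
  have hsup : (⨆ x, P x) = P xm :=
    le_antisymm (iSup_le fun x => hxm x (mem_univ x)) (le_iSup P xm)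
  have hPmt : P xm ≠ ⊤ :=
    ne_top_of_le_ne_top ENNReal.one_ne_top (sum_le_one_of_sum_eq_one hP xm)
  have hPm0 : P xm ≠ 0 := by
    intro h
    exact hx0 (le_antisymm (h ▸ hxm x0 (mem_univ x0)) zero_le)
  refine ⟨fun x => if x = xm then 1 else 0, by simp, ?_⟩
  have eT : ∑ x, P x * (((if x = xm then (1:ℝ≥0∞) else 0) * (if x = xm then 1 else 0)) ^ (α - 1))
      = P xm := by
    rw [Finset.sum_eq_single xm]
    · simp
    · intro b _ hb
      rw [if_neg hb, mul_zero, ENNReal.zero_rpow_of_pos (by linarith), mul_zero]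
    · intro h
      exact absurd (mem_univ xm) h
  have eB : ∑ x, (if x = xm then (1:ℝ≥0∞) else 0) ^ α = 1 := by
    have h : ∀ x : X, (if x = xm then (1:ℝ≥0∞) else 0) ^ α
        = if x = xm then 1 else 0 := by
      intro x
      split
      · exact ENNReal.one_rpow α
      · exact ENNReal.zero_rpow_of_pos hα0
    rw [Finset.sum_congr rfl fun x _ => h x]
    simp
  beta_reduce
  rw [relAlphaEnt_prod P (fun x => if x = xm then (1:ℝ≥0∞) else 0)
    (fun x => if x = xm then (1:ℝ≥0∞) else 0) hα0 hα1, eT, eB,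
    ereal_expr_coe hPm0 hPmt one_ne_zero ENNReal.one_ne_top one_ne_zero ENNReal.one_ne_top
      hC0 hCt, EReal.coe_eq_coe_iff, hsup, toReal_Spow P α hCt]
  simp [Real.log_one]

/-- RHS of the theorem, branch `α ∈ (0,2) \ {1}`, as a real coercion. -/
lemma rhs_lt2 {α : ℝ} (hα : 0 < α) (hα1 : α ≠ 1) (hα2 : α < 2)
    (P : X → ℝ≥0∞) (hP : ∑ x, P x = 1) :
    ((2 : ℝ) : EReal) * renyiEnt (α / (2 - α)) P - renyiEnt α P
      = (((2 - α) / (1 - α) * Real.log (∑ x, (P x).toReal ^ (α / (2 - α)))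
          - (1 - α)⁻¹ * Real.log (∑ x, (P x).toReal ^ α) : ℝ) : EReal) := by
  have h2α : (0:ℝ) < 2 - α := by linarith
  have h1α : (1:ℝ) - α ≠ 0 := fun h => hα1 (by linarith)
  have hβ : 0 < α / (2 - α) := div_pos hα h2α
  have hβ1 : α / (2 - α) ≠ 1 := by
    intro h
    rw [div_eq_one_iff_eq h2α.ne'] at h
    exact hα1 (by linarith)
  have hb : (1:ℝ) - α / (2 - α) ≠ 0 := fun h => hβ1 (by linarith)
  rw [renyiEnt, if_neg hβ1, renyiEnt, if_neg hα1,
    ENNReal.log_pos_real (sum_rpow_ne_zero hP hβ) (sum_rpow_ne_top hP hβ),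
    ENNReal.log_pos_real (sum_rpow_ne_zero hP hα) (sum_rpow_ne_top hP hα),
    toReal_Spow P _ (sum_rpow_ne_top hP hβ), toReal_Spow P α (sum_rpow_ne_top hP hα)]
  have hd : (2:ℝ) - α * 2 ≠ 0 := fun h => hα1 (by linarith)
  set L1 := Real.log (∑ x, (P x).toReal ^ (α / (2 - α)))
  set L2 := Real.log (∑ x, (P x).toReal ^ α)
  norm_cast
  field_simp [hd]
  linear_combination (2 - α) * L1 * mul_inv_cancel₀ hd

/-- RHS of the theorem, branch `α ≥ 2`, as a real coercion. -/
lemma rhs_ge2 {α : ℝ} (hα : 2 ≤ α) (P : X → ℝ≥0∞) (hP : ∑ x, P x = 1) :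
    ((α / (α - 1) : ℝ) : EReal) * minEnt P - renyiEnt α P
      = ((α / (1 - α) * Real.log (⨆ x, P x).toReal
          - (1 - α)⁻¹ * Real.log (∑ x, (P x).toReal ^ α) : ℝ) : EReal) := by
  have hα0 : (0:ℝ) < α := by linarith
  have hα1 : α ≠ 1 := fun h => by rw [h] at hα; linarith
  have h1 : α - 1 ≠ 0 := fun h => hα1 (by linarith)
  have h1' : (1:ℝ) - α ≠ 0 := fun h => hα1 (by linarith)
  obtain ⟨x0, hx0⟩ := exists_ne_zero_of_sum_eq_one hP
  have hMt : (⨆ x, P x) ≠ ⊤ :=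
    ne_top_of_le_ne_top ENNReal.one_ne_top (iSup_le fun x => sum_le_one_of_sum_eq_one hP x)
  have hM0 : (⨆ x, P x) ≠ 0 := fun h =>
    hx0 (le_antisymm (h ▸ le_iSup P x0) zero_le)
  rw [minEnt, renyiEnt, if_neg hα1, ENNReal.log_pos_real hM0 hMt,
    ENNReal.log_pos_real (sum_rpow_ne_zero hP hα0) (sum_rpow_ne_top hP hα0),
    toReal_Spow P α (sum_rpow_ne_top hP hα0)]
  norm_cast
  field_simp
  ring

end Value
section KLCase
set_option linter.unusedSectionVars false
variable {X : Type*} [Fintype X] [DecidableEq X]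

lemma klDiv_prod (P Q1 Q2 : X → ℝ≥0∞) (hguard : ∀ x : X, Q1 x * Q2 x = 0 → P x = 0) :
    klDiv (fun p : X × X => if p.1 = p.2 then P p.1 else 0) (fun p => Q1 p.1 * Q2 p.2)
      = ((∑ x, (P x).toReal
          * Real.log ((P x).toReal / ((Q1 x).toReal * (Q2 x).toReal)) : ℝ) : EReal) := by
  rw [klDiv, if_pos]
  · norm_cast
    rw [Fintype.sum_prod_type]
    refine Finset.sum_congr rfl fun x _ => ?_
    have h : ∀ y : X, (if x = y then P x else 0).toReal
        * Real.log ((if x = y then P x else 0).toReal / ((Q1 x * Q2 y)).toReal)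
        = if x = y then (P x).toReal
            * Real.log ((P x).toReal / ((Q1 x).toReal * (Q2 x).toReal)) else 0 := by
      intro y
      split_ifs with hxy
      · subst hxy
        rw [ENNReal.toReal_mul]
      · simp
    calc ∑ y, (if x = y then P x else 0).toReal
          * Real.log ((if x = y then P x else 0).toReal / ((Q1 x * Q2 y)).toReal)
        = ∑ y, (if x = y then (P x).toReal
            * Real.log ((P x).toReal / ((Q1 x).toReal * (Q2 x).toReal)) else 0) :=
          Finset.sum_congr rfl fun y _ => h y
      _ = _ := by simp
  · rintro ⟨x, y⟩ h
    dsimp only at h ⊢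
    split_ifs with hxy
    · exact hguard x (by rwa [← hxy] at h)
    · rfl

lemma toReal_sum_one {P : X → ℝ≥0∞} (hP : ∑ x, P x = 1) : ∑ x, (P x).toReal = 1 := by
  rw [← toReal_sum' P (by rw [hP]; exact ENNReal.one_ne_top), hP, ENNReal.toReal_one]

/-- Lower bound in the `α = 1` case. -/
lemma lower_eq1 (P Q1 Q2 : X → ℝ≥0∞) (hP : ∑ x, P x = 1)
    (hQ1 : ∑ x, Q1 x = 1) (hQ2 : ∑ x, Q2 x = 1) :
    ((∑ x, (P x).toReal * Real.log (P x).toReal⁻¹ : ℝ) : EReal)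
      ≤ klDiv (fun p : X × X => if p.1 = p.2 then P p.1 else 0)
          (fun p => Q1 p.1 * Q2 p.2) := by
  by_cases hc : ∀ p : X × X, (fun p : X × X => Q1 p.1 * Q2 p.2) p = 0 →
      (fun p : X × X => if p.1 = p.2 then P p.1 else 0) p = 0
  · have hguard : ∀ x : X, Q1 x * Q2 x = 0 → P x = 0 := by
      intro x h
      have := hc (x, x) h
      simpa using this
    rw [klDiv_prod P Q1 Q2 hguard, EReal.coe_le_coe_iff]
    set p : X → ℝ := fun x => (P x).toReal with hp_def
    set q1 : X → ℝ := fun x => (Q1 x).toReal with hq1_def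
    set q2 : X → ℝ := fun x => (Q2 x).toReal with hq2_def
    have hpn : ∀ x, 0 ≤ p x := fun x => ENNReal.toReal_nonneg
    have hq1n : ∀ x, 0 ≤ q1 x := fun x => ENNReal.toReal_nonneg
    have hq2n : ∀ x, 0 ≤ q2 x := fun x => ENNReal.toReal_nonneg
    have hQ1t : ∀ x, Q1 x ≠ ⊤ :=
      fun x => ne_top_of_le_ne_top ENNReal.one_ne_top (sum_le_one_of_sum_eq_one hQ1 x)
    have hQ2t : ∀ x, Q2 x ≠ ⊤ :=
      fun x => ne_top_of_le_ne_top ENNReal.one_ne_top (sum_le_one_of_sum_eq_one hQ2 x)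
    have hguard_r : ∀ x, q1 x * q2 x = 0 → p x = 0 := by
      intro x h
      have h0 : Q1 x * Q2 x = 0 := by
        have : (Q1 x * Q2 x).toReal = 0 := by rw [ENNReal.toReal_mul]; exact h
        rcases (ENNReal.toReal_eq_zero_iff _).1 this with h' | h'
        · exact h'
        · exact absurd h' (ENNReal.mul_ne_top (hQ1t x) (hQ2t x))
      rw [hp_def]; simp [hguard x h0]
    have hsplit : ∀ x, p x * Real.log (p x / (q1 x * q2 x))
        = p x * Real.log (p x) - p x * Real.log (q1 x) - p x * Real.log (q2 x) := by
      intro x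
      rcases (hpn x).eq_or_lt with hpx | hpx
      · rw [← hpx]; ring
      · have hq12 : q1 x * q2 x ≠ 0 := fun h => hpx.ne' (hguard_r x h)
        have hq1x : q1 x ≠ 0 := fun h => hq12 (by rw [h, zero_mul])
        have hq2x : q2 x ≠ 0 := fun h => hq12 (by rw [h, mul_zero])
        rw [Real.log_div hpx.ne' hq12, Real.log_mul hq1x hq2x]
        ring
    have hg1 : ∑ x, p x * Real.log (q1 x) ≤ ∑ x, p x * Real.log (p x) :=
      myGibbs p q1 hpn hq1n (toReal_sum_one hP) (le_of_eq (toReal_sum_one hQ1))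
        fun x h => hguard_r x (by rw [h, zero_mul])
    have hg2 : ∑ x, p x * Real.log (q2 x) ≤ ∑ x, p x * Real.log (p x) :=
      myGibbs p q2 hpn hq2n (toReal_sum_one hP) (le_of_eq (toReal_sum_one hQ2))
        fun x h => hguard_r x (by rw [h, mul_zero])
    have hH : ∑ x, p x * Real.log (p x)⁻¹ = -∑ x, p x * Real.log (p x) := by
      rw [← Finset.sum_neg_distrib]
      exact Finset.sum_congr rfl fun x _ => by rw [Real.log_inv]; ring
    calc ∑ x, p x * Real.log (p x)⁻¹ = -∑ x, p x * Real.log (p x) := hH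
      _ ≤ ∑ x, (p x * Real.log (p x) - p x * Real.log (q1 x) - p x * Real.log (q2 x)) := by
          rw [Finset.sum_sub_distrib, Finset.sum_sub_distrib]
          linarith
      _ = ∑ x, p x * Real.log (p x / (q1 x * q2 x)) :=
          (Finset.sum_congr rfl fun x _ => (hsplit x).symm)
  · rw [klDiv, if_neg hc]
    exact le_top

/-- Value in the `α = 1` case at `Q1 = Q2 = P`. -/
lemma value_eq1 (P : X → ℝ≥0∞) (hP : ∑ x, P x = 1) :
    klDiv (fun p : X × X => if p.1 = p.2 then P p.1 else 0) (fun p => P p.1 * P p.2)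
      = ((∑ x, (P x).toReal * Real.log (P x).toReal⁻¹ : ℝ) : EReal) := by
  have hguard : ∀ x : X, P x * P x = 0 → P x = 0 := by
    intro x h
    exact (mul_eq_zero.1 h).elim id id
  rw [klDiv_prod P P P hguard, EReal.coe_eq_coe_iff]
  refine Finset.sum_congr rfl fun x _ => ?_
  rcases (ENNReal.toReal_nonneg : 0 ≤ (P x).toReal).eq_or_lt with hpx | hpx
  · rw [← hpx]; ring
  · rw [show (P x).toReal / ((P x).toReal * (P x).toReal) = (P x).toReal⁻¹ by
      field_simp]

/-- RHS of the theorem in the `α = 1` case. -/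
lemma rhs_eq1 (P : X → ℝ≥0∞) :
    ((2 : ℝ) : EReal) * renyiEnt (1 : ℝ) P - renyiEnt (1 : ℝ) P
      = ((∑ x, (P x).toReal * Real.log (P x).toReal⁻¹ : ℝ) : EReal) := by
  rw [renyiEnt, if_pos rfl, ← EReal.coe_mul, ← EReal.coe_sub]
  exact EReal.coe_eq_coe_iff.2 (by ring)

end KLCase

/-- `K_α(X;X) = 2 H_{α/(2-α)}(X) - H_α(X)` for `α ∈ (0,2)` and
`K_α(X;X) = (α/(α-1)) H_∞(X) - H_α(X)` for `α ≥ 2`. -/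
theorem stmt19 {X : Type*} [Fintype X] [DecidableEq X] (P : X → ℝ≥0∞) (hP : ∑ x, P x = 1) (α : ℝ) :
    (0 < α → α < 2 →
      Kalpha α (fun p : X × X => if p.1 = p.2 then P p.1 else 0) =
        ((2 : ℝ) : EReal) * renyiEnt (α / (2 - α)) P - renyiEnt α P) ∧
    (2 ≤ α →
      Kalpha α (fun p : X × X => if p.1 = p.2 then P p.1 else 0) =
        ((α / (α - 1) : ℝ) : EReal) * minEnt P - renyiEnt α P) := by
  constructor
  · intro hα0 hα2
    by_cases hα1 : α = 1
    · subst hα1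
      rw [Kalpha, show (1:ℝ) / (2 - 1) = 1 by norm_num, rhs_eq1 P]
      apply le_antisymm
      · refine le_trans (iInf_le _ (⟨⟨P, hP⟩, ⟨P, hP⟩⟩ : PMFon X × PMFon X)) ?_
        rw [relAlphaEnt, if_pos rfl]
        exact le_of_eq (value_eq1 P hP)
      · refine le_iInf ?_
        rintro ⟨⟨q1, hq1⟩, ⟨q2, hq2⟩⟩
        rw [relAlphaEnt, if_pos rfl]
        exact lower_eq1 P q1 q2 hP hq1 hq2
    · rw [Kalpha, rhs_lt2 hα0 hα1 hα2 P hP]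
      obtain ⟨Qs, hQs, hval⟩ := value_lt2 hα0 hα1 hα2 P hP
      apply le_antisymm
      · exact le_trans (iInf_le _ (⟨⟨Qs, hQs⟩, ⟨Qs, hQs⟩⟩ : PMFon X × PMFon X))
          (le_of_eq hval)
      · refine le_iInf ?_
        rintro ⟨⟨q1, hq1⟩, ⟨q2, hq2⟩⟩
        exact lower_lt2 hα0 hα1 hα2 P q1 q2 hP hq1 hq2
  · intro hα2
    rw [Kalpha, rhs_ge2 hα2 P hP]
    obtain ⟨Qs, hQs, hval⟩ := value_ge2 hα2 P hP
    apply le_antisymm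
    · exact le_trans (iInf_le _ (⟨⟨Qs, hQs⟩, ⟨Qs, hQs⟩⟩ : PMFon X × PMFon X))
        (le_of_eq hval)
    · refine le_iInf ?_
      rintro ⟨⟨q1, hq1⟩, ⟨q2, hq2⟩⟩
      exact lower_ge2 hα2 P q1 q2 hP hq1 hq2
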